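/- Let P be a locally finite poset with least element 0̂ in which every finite interval is graded. Then P is triangular (every interval [x,y] with ρ(x)=i, ρ(y)=j has a number M(i,j) of maximal chains depending only on i,j) if and only if there exists a function N(i,j,k) such that every interval [x,y] with ρ(x)=i, ρ(y)=k contains exactly N(i,j,k) elements of rank j, for all i < j < k. -/

import Mathlib

/-- The set of maximal chains of the interval `[x, y]`: saturated chains
`x = c₀ ⋖ c₁ ⋖ ⋯ ⋖ c_k = y`, encoded as lists. -/
def maxChains {P : Type*} [PartialOrder P] (x y : P) : Set (List P) :=
  {l | l.Chain' (· ⋖ ·) ∧ l.head? = some x ∧ l.getLast? = some y}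

set_option linter.unusedSectionVars false

section Helpers

variable {P : Type*} [PartialOrder P] [LocallyFiniteOrder P]


lemma mem_of_getLast?_eq {α : Type*} {l : List α} {y : α} (h : l.getLast? = some y) : y ∈ l := by
  have hne : l ≠ [] := by rintro rfl; simp at h
  rw [List.getLast?_eq_getLast_of_ne_nil hne] at h
  exact (Option.some_inj.mp h).symm ▸ List.getLast_mem hne

lemma le_getLast_of_pairwise : ∀ {l : List P}, l.Pairwise (· < ·) → ∀ {z y : P},
    z ∈ l → l.getLast? = some y → z ≤ y := by
  intro l
  induction l with
  | nil => simp
  | cons a t ih =>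
    intro hp z y hz hy
    cases t with
    | nil =>
      simp only [List.mem_singleton] at hz
      simp only [List.getLast?_singleton, Option.some_inj] at hy
      subst hz; subst hy; rfl
    | cons b r =>
      rw [List.getLast?_cons_cons] at hy
      rcases List.mem_cons.mp hz with rfl | hz'
      · exact ((List.pairwise_cons.mp hp).1 y (mem_of_getLast?_eq hy)).le
      · exact ih (List.pairwise_cons.mp hp).2 hz' hy

lemma pairwise_of_maxChains {x y : P} {l : List P} (hl : l ∈ maxChains x y) :
    l.Pairwise (· < ·) :=
  List.isChain_iff_pairwise.mp (hl.1.imp fun _ _ h => h.lt)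

lemma bounds_of_mem_maxChains {x y z : P} {l : List P} (hl : l ∈ maxChains x y)
    (hz : z ∈ l) : x ≤ z ∧ z ≤ y := by
  obtain ⟨hc, hh, hlast⟩ := hl
  have hp := pairwise_of_maxChains ⟨hc, hh, hlast⟩
  constructor
  · cases l with
    | nil => simp at hh
    | cons a t =>
      simp only [List.head?_cons, Option.some_inj] at hh
      subst hh
      rcases List.mem_cons.mp hz with rfl | hz'
      · rfl
      · exact ((List.pairwise_cons.mp hp).1 z hz').le
  · exact le_getLast_of_pairwise hp hz hlast

lemma maxChains_finite (x y : P) : (maxChains x y).Finite := by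
  classical
  apply Set.Finite.of_finite_image (f := List.toFinset)
  · apply Set.Finite.subset ((Finset.Icc x y).powerset : Finset (Finset P)).finite_toSet
    rintro s ⟨l, hl, rfl⟩
    simp only [Finset.coe_powerset, Set.mem_preimage, Set.mem_powerset_iff, Finset.coe_subset,
      Finset.mem_coe, Finset.mem_powerset]
    intro z hz
    rw [List.mem_toFinset] at hz
    obtain ⟨h1, h2⟩ := bounds_of_mem_maxChains hl hz
    exact Finset.mem_Icc.mpr ⟨h1, h2⟩
  · intro l₁ h₁ l₂ h₂ he
    have hp₁ := pairwise_of_maxChains h₁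
    have hp₂ := pairwise_of_maxChains h₂
    have nd₁ : l₁.Nodup := hp₁.imp ne_of_lt
    have nd₂ : l₂.Nodup := hp₂.imp ne_of_lt
    exact List.Perm.eq_of_pairwise' (hp₁.imp le_of_lt) (hp₂.imp le_of_lt) (List.perm_of_nodup_nodup_toFinset_eq nd₁ nd₂ he)

lemma singleton_mem_maxChains (x : P) : [x] ∈ maxChains x x :=
  ⟨List.isChain_singleton x, rfl, rfl⟩

lemma cons_mem_maxChains {x z y : P} (hxz : x ⋖ z) {m : List P} (hm : m ∈ maxChains z y) :
    x :: m ∈ maxChains x y := by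
  obtain ⟨hc, hh, hlast⟩ := hm
  cases m with
  | nil => simp at hh
  | cons a t =>
    simp only [List.head?_cons, Option.some_inj] at hh
    subst hh
    exact ⟨List.isChain_cons_cons.mpr ⟨hxz, hc⟩, rfl, by rwa [List.getLast?_cons_cons]⟩

lemma mem_maxChains_iff_cons {x y : P} (hxy : x < y) (l : List P) :
    l ∈ maxChains x y ↔ ∃ z, (x ⋖ z ∧ z ≤ y) ∧ ∃ m ∈ maxChains z y, x :: m = l := by
  constructor
  · intro hl
    obtain ⟨hc, hh, hlast⟩ := hl
    cases l with
    | nil => simp at hh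
    | cons a t =>
      simp only [List.head?_cons, Option.some_inj] at hh
      subst hh
      cases t with
      | nil =>
        simp only [List.getLast?_singleton, Option.some_inj] at hlast
        exact absurd hlast hxy.ne
      | cons z r =>
        obtain ⟨hxz, hc'⟩ := List.isChain_cons_cons.mp hc
        rw [List.getLast?_cons_cons] at hlast
        have hmem : (z :: r) ∈ maxChains z y := ⟨hc', rfl, hlast⟩
        have hzy : z ≤ y :=
          (bounds_of_mem_maxChains hmem (List.mem_cons_self (a := z) (l := r))).2
        exact ⟨z, ⟨hxz, hzy⟩, z :: r, hmem, rfl⟩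
  · rintro ⟨z, ⟨hxz, _⟩, m, hm, rfl⟩
    exact cons_mem_maxChains hxz hm


variable {ρ : P → ℕ} (hcov : ∀ a b : P, a ⋖ b → ρ b = ρ a + 1)
include hcov

lemma rk_lt_of_lt : ∀ (n : ℕ) (x y : P), (Finset.Icc x y).card ≤ n → x < y → ρ x < ρ y := by
  intro n
  induction n with
  | zero =>
    intro x y hc h
    exact absurd (Finset.card_pos.mpr ⟨x, Finset.mem_Icc.mpr ⟨le_refl x, h.le⟩⟩) (by omega)
  | succ n ih =>
    intro x y hc h
    obtain ⟨z, hz, hzy⟩ := exists_covBy_le_of_lt h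
    rcases eq_or_lt_of_le hzy with rfl | hlt
    · rw [hcov _ _ hz]; omega
    · have hsub : Finset.Icc z y ⊆ Finset.Icc x y := Finset.Icc_subset_Icc_left hz.lt.le
      have hss : Finset.Icc z y ⊂ Finset.Icc x y := by
        refine ⟨hsub, fun hcon => ?_⟩
        have hx : x ∈ Finset.Icc z y := hcon (Finset.mem_Icc.mpr ⟨le_refl x, h.le⟩)
        exact hz.lt.not_ge (Finset.mem_Icc.mp hx).1
      have := ih z y (by have := Finset.card_lt_card hss; omega) hlt
      have := hcov _ _ hz
      omega

lemma rk_lt_of_lt' {x y : P} (h : x < y) : ρ x < ρ y :=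
  rk_lt_of_lt hcov (Finset.Icc x y).card x y le_rfl h

lemma rk_le_of_le {x y : P} (h : x ≤ y) : ρ x ≤ ρ y := by
  rcases eq_or_lt_of_le h with rfl | h
  · exact le_rfl
  · exact (rk_lt_of_lt' hcov h).le

lemma covBy_of_rank {x z : P} (h : x < z) (hr : ρ z = ρ x + 1) : x ⋖ z := by
  refine ⟨h, fun w hw1 hw2 => ?_⟩
  have := rk_lt_of_lt' hcov hw1
  have := rk_lt_of_lt' hcov hw2
  omega

lemma exists_rank : ∀ (n : ℕ) (x y : P), x ≤ y → ∀ j, ρ x ≤ j → j ≤ ρ y → j - ρ x ≤ n →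
    ∃ z, x ≤ z ∧ z ≤ y ∧ ρ z = j := by
  intro n
  induction n with
  | zero =>
    intro x y _ j h1 _ h3
    exact ⟨x, le_refl x, by assumption, by omega⟩
  | succ n ih =>
    intro x y hxy j h1 h2 h3
    rcases eq_or_lt_of_le h1 with rfl | hlt
    · exact ⟨x, le_refl x, hxy, rfl⟩
    · have hxlty : x < y := by
        rcases eq_or_lt_of_le hxy with rfl | h
        · omega
        · exact h
      obtain ⟨z, hz, hzy⟩ := exists_covBy_le_of_lt hxlty
      have hrz := hcov _ _ hz
      obtain ⟨w, hw1, hw2, hw3⟩ := ih z y hzy j (by omega)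
        (by omega) (by omega)
      exact ⟨w, hz.lt.le.trans hw1, hw2, hw3⟩

lemma maxChains_nonempty : ∀ (n : ℕ) (x y : P), x ≤ y → ρ y - ρ x ≤ n →
    (maxChains x y).Nonempty := by
  intro n
  induction n with
  | zero =>
    intro x y hxy h
    rcases eq_or_lt_of_le hxy with rfl | hlt
    · exact ⟨[x], singleton_mem_maxChains x⟩
    · exact absurd (rk_lt_of_lt' hcov hlt) (by omega)
  | succ n ih =>
    intro x y hxy h
    rcases eq_or_lt_of_le hxy with rfl | hlt
    · exact ⟨[x], singleton_mem_maxChains x⟩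
    · obtain ⟨z, hz, hzy⟩ := exists_covBy_le_of_lt hlt
      have hrz := hcov _ _ hz
      have hzyr := rk_le_of_le hcov hzy
      obtain ⟨m, hm⟩ := ih z y hzy (by omega)
      exact ⟨x :: m, cons_mem_maxChains hz hm⟩

lemma maxChains_card_pos {x y : P} (h : x ≤ y) : 0 < Nat.card (maxChains x y) := by
  obtain ⟨m, hm⟩ := maxChains_nonempty hcov (ρ y - ρ x) x y h le_rfl
  have : Finite (maxChains x y) := (maxChains_finite x y).to_subtype
  have : Nonempty (maxChains x y) := ⟨⟨m, hm⟩⟩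
  exact Nat.card_pos

omit hcov

lemma maxChains_split (x y : P) (hxy : x < y) (C : Finset P)
    (hC : ∀ z, z ∈ C ↔ x ⋖ z ∧ z ≤ y) :
    Nat.card (maxChains x y) = ∑ z ∈ C, Nat.card (maxChains z y) := by
  classical
  rw [Nat.card_coe_set_eq, Set.ncard_eq_toFinset_card _ (maxChains_finite x y)]
  have key : (maxChains_finite x y).toFinset
      = C.biUnion (fun z => ((maxChains_finite z y).toFinset).image (x :: ·)) := by
    ext l
    simp only [Set.Finite.mem_toFinset, Finset.mem_biUnion, Finset.mem_image,
      Set.Finite.mem_toFinset, hC]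
    rw [mem_maxChains_iff_cons hxy]
  rw [key, Finset.card_biUnion]
  · refine Finset.sum_congr rfl fun z _ => ?_
    rw [Finset.card_image_of_injective _ (List.cons_injective),
      Nat.card_coe_set_eq, Set.ncard_eq_toFinset_card _ (maxChains_finite z y)]
  · intro z₁ _ z₂ _ hne
    rw [Function.onFun, Finset.disjoint_left]
    rintro l hl₁ hl₂
    simp only [Finset.mem_image, Set.Finite.mem_toFinset] at hl₁ hl₂
    obtain ⟨m₁, hm₁, he₁⟩ := hl₁
    obtain ⟨m₂, hm₂, he₂⟩ := hl₂
    have : m₁ = m₂ := List.cons_injective (he₁.trans he₂.symm)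
    subst this
    exact hne (Option.some_inj.mp (hm₁.2.1.symm.trans hm₂.2.1))

lemma maxChains_covBy {x y : P} (h : x ⋖ y) : maxChains x y = {[x, y]} := by
  ext l
  simp only [Set.mem_singleton_iff]
  constructor
  · intro hl
    rw [mem_maxChains_iff_cons h.lt] at hl
    obtain ⟨z, ⟨hxz, hzy⟩, m, hm, rfl⟩ := hl
    have hzy' : z = y := by
      rcases eq_or_lt_of_le hzy with rfl | hlt
      · rfl
      · exact absurd hlt (h.2 hxz.lt)
    subst hzy'
    obtain ⟨hc, hh, hlast⟩ := hm
    cases m with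
    | nil => simp at hh
    | cons a t =>
      simp only [List.head?_cons, Option.some_inj] at hh
      subst hh
      cases t with
      | nil => rfl
      | cons w r =>
        obtain ⟨hzw, _⟩ := List.isChain_cons_cons.mp hc
        have hwy :=
          (bounds_of_mem_maxChains ⟨hc, rfl, hlast⟩ (List.mem_cons_of_mem _ (List.mem_cons_self (a := w) (l := r)))).2
        exact absurd hwy hzw.lt.not_ge
  · rintro rfl
    exact ⟨List.isChain_pair.mpr h, rfl, rfl⟩

end Helpers

section Main

variable {P : Type*} [PartialOrder P] [LocallyFiniteOrder P]

/-- The finset of elements of rank `j` in the interval `[a, b]`. -/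
def Lf (ρ : P → ℕ) (a b : P) (j : ℕ) : Finset P :=
  (Finset.Icc a b).filter (fun z => ρ z = j)

lemma mem_Lf {ρ : P → ℕ} {a b z : P} {j : ℕ} :
    z ∈ Lf ρ a b j ↔ a ≤ z ∧ z ≤ b ∧ ρ z = j := by
  simp [Lf, Finset.mem_Icc, and_assoc]

lemma card_Lf_eq (ρ : P → ℕ) (a b : P) (j : ℕ) :
    Nat.card {z : P | a ≤ z ∧ z ≤ b ∧ ρ z = j} = (Lf ρ a b j).card := by
  have h : {z : P | a ≤ z ∧ z ≤ b ∧ ρ z = j} = ↑(Lf ρ a b j) := by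
    ext z
    simp [mem_Lf]
  rw [h, Nat.card_coe_set_eq, Set.ncard_coe_finset]

lemma dc (ρ : P → ℕ) (a b : P) (j : ℕ) :
    ∑ z ∈ Lf ρ a b (ρ a + 1), (Lf ρ z b j).card
      = ∑ w ∈ Lf ρ a b j, (Lf ρ a w (ρ a + 1)).card := by
  classical
  have e1 : ∀ z ∈ Lf ρ a b (ρ a + 1), Lf ρ z b j = (Lf ρ a b j).filter (fun w => z ≤ w) := by
    intro z hz
    obtain ⟨haz, hzb, hrz⟩ := mem_Lf.mp hz
    ext w
    simp only [mem_Lf, Finset.mem_filter]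
    constructor
    · rintro ⟨hzw, hwb, hw⟩; exact ⟨⟨haz.trans hzw, hwb, hw⟩, hzw⟩
    · rintro ⟨⟨_, hwb, hw⟩, hzw⟩; exact ⟨hzw, hwb, hw⟩
  have e2 : ∀ w ∈ Lf ρ a b j, Lf ρ a w (ρ a + 1) = (Lf ρ a b (ρ a + 1)).filter (fun z => z ≤ w) := by
    intro w hw
    obtain ⟨haw, hwb, hrw⟩ := mem_Lf.mp hw
    ext z
    simp only [mem_Lf, Finset.mem_filter]
    constructor
    · rintro ⟨haz, hzw, hz⟩; exact ⟨⟨haz, hzw.trans hwb, hz⟩, hzw⟩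
    · rintro ⟨⟨haz, _, hz⟩, hzw⟩; exact ⟨haz, hzw, hz⟩
  calc ∑ z ∈ Lf ρ a b (ρ a + 1), (Lf ρ z b j).card
      = ∑ z ∈ Lf ρ a b (ρ a + 1), ∑ w ∈ Lf ρ a b j, if z ≤ w then 1 else 0 := by
        refine Finset.sum_congr rfl fun z hz => ?_
        rw [e1 z hz, Finset.card_filter]
    _ = ∑ w ∈ Lf ρ a b j, ∑ z ∈ Lf ρ a b (ρ a + 1), if z ≤ w then 1 else 0 := Finset.sum_comm
    _ = ∑ w ∈ Lf ρ a b j, (Lf ρ a w (ρ a + 1)).card := by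
        refine Finset.sum_congr rfl fun w hw => ?_
        rw [e2 w hw, Finset.card_filter]

variable {ρ : P → ℕ} (hcov : ∀ a b : P, a ⋖ b → ρ b = ρ a + 1)
include hcov

lemma mem_Lf_cover {x y : P} (z : P) :
    z ∈ Lf ρ x y (ρ x + 1) ↔ x ⋖ z ∧ z ≤ y := by
  rw [mem_Lf]
  constructor
  · rintro ⟨h1, h2, h3⟩
    have hxz : x < z := lt_of_le_of_ne h1 (by rintro rfl; omega)
    exact ⟨covBy_of_rank hcov hxz h3, h2⟩
  · rintro ⟨hc, hz⟩
    exact ⟨hc.lt.le, hz, hcov _ _ hc⟩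

lemma Lf_cover_card_pos {x y : P} (hxy : x < y) : 0 < (Lf ρ x y (ρ x + 1)).card := by
  obtain ⟨z, hz, hzy⟩ := exists_covBy_le_of_lt hxy
  exact Finset.card_pos.mpr ⟨z, (mem_Lf_cover hcov z).mpr ⟨hz, hzy⟩⟩

end Main



/-- A locally finite poset `P` with least element, all of whose intervals are graded
(witnessed by a rank function `ρ` increasing by one along covers), is triangular
(the number of maximal chains of `[x,y]` depends only on `(ρ x, ρ y)`) if and only
if there is a function `N` such that every interval `[x,y]` with `ρ x = i`,
`ρ y = k` has exactly `N i j k` elements of rank `j`, for all `i < j < k`. -/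
theorem stmt2 {P : Type*} [PartialOrder P] [OrderBot P] [LocallyFiniteOrder P]
    (ρ : P → ℕ) (hρ0 : ρ ⊥ = 0) (hcov : ∀ a b : P, a ⋖ b → ρ b = ρ a + 1) :
    (∃ M : ℕ → ℕ → ℕ, ∀ x y : P, x < y → Nat.card (maxChains x y) = M (ρ x) (ρ y)) ↔
    (∃ N : ℕ → ℕ → ℕ → ℕ, ∀ x y : P, x ≤ y → ∀ j : ℕ, ρ x < j → j < ρ y →
      Nat.card {z : P | x ≤ z ∧ z ≤ y ∧ ρ z = j} = N (ρ x) j (ρ y)) := by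
  constructor
  · rintro ⟨M, hM⟩
    classical
    have hpos : ∀ x y : P, x < y → 0 < M (ρ x) (ρ y) := by
      intro x y h
      rw [← hM x y h]
      exact maxChains_card_pos hcov h.le
    -- base relation: for x < y with ρ x + 1 < ρ y,
    -- (number of covers of x in [x,y]) * M (ρ x + 1) (ρ y) = M (ρ x) (ρ y)
    have base : ∀ x y : P, x < y → ρ x + 1 < ρ y →
        (Lf ρ x y (ρ x + 1)).card * M (ρ x + 1) (ρ y) = M (ρ x) (ρ y) := by
      intro x y hxy hr
      rw [← hM x y hxy,
        maxChains_split x y hxy (Lf ρ x y (ρ x + 1)) (mem_Lf_cover hcov)]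
      rw [Finset.sum_congr rfl (fun z hz => ?_), Finset.sum_const, smul_eq_mul]
      obtain ⟨_, hzy, hrz⟩ := mem_Lf.mp hz
      have hzylt : z < y := lt_of_le_of_ne hzy (by rintro rfl; omega)
      rw [hM z y hzylt, hrz]
    -- well-definedness for j = ρ x + 1
    have wd1 : ∀ x y x' y' : P, x < y → x' < y' → ρ x = ρ x' → ρ y = ρ y' →
        ρ x + 1 < ρ y → (Lf ρ x y (ρ x + 1)).card = (Lf ρ x' y' (ρ x' + 1)).card := by
      intro x y x' y' hxy hxy' hrx hry hr
      have hb := base x y hxy hr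
      have hb' := base x' y' hxy' (by omega)
      rw [← hrx, ← hry] at hb'
      obtain ⟨z, hz, hzy⟩ := exists_covBy_le_of_lt hxy
      have hrz := hcov _ _ hz
      have hzylt : z < y := lt_of_le_of_ne hzy (by rintro rfl; omega)
      have hMp : 0 < M (ρ x + 1) (ρ y) := by
        have := hpos z y hzylt
        rwa [hrz] at this
      rw [← hrx]
      exact Nat.eq_of_mul_eq_mul_right hMp (hb.trans hb'.symm)
    -- general well-definedness, by induction on j - ρ x
    have wd : ∀ d : ℕ, ∀ x y x' y' : P, x ≤ y → x' ≤ y' → ρ x = ρ x' → ρ y = ρ y' →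
        ∀ j, ρ x < j → j < ρ y → j - ρ x ≤ d →
        (Lf ρ x y j).card = (Lf ρ x' y' j).card := by
      intro d
      induction d with
      | zero => intro x y x' y' _ _ _ _ j h1 h2 h3; omega
      | succ d ih =>
        intro x y x' y' hxy hxy' hrx hry j hj1 hj2 hd
        have hxlty : x < y := lt_of_le_of_ne hxy (by rintro rfl; omega)
        have hxlty' : x' < y' := lt_of_le_of_ne hxy' (by rintro rfl; omega)
        rcases eq_or_lt_of_le (show ρ x + 1 ≤ j by omega) with heq | hjgt
        · subst heq
          have h := wd1 x y x' y' hxlty hxlty' hrx hry hj2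
          rwa [← hrx] at h
        · -- pick a cover z₀' of x' in [x', y'] and an element w₀' of rank j in [x', y']
          obtain ⟨z₀', hz₀', hz₀'le⟩ := exists_covBy_le_of_lt hxlty'
          have hrz₀' := hcov _ _ hz₀'
          obtain ⟨w₀', hw₀'1, hw₀'2, hw₀'3⟩ := exists_rank hcov (j - ρ x') x' y' hxy' j
            (by omega) (by omega) le_rfl
          have hx'w₀' : x' < w₀' := lt_of_le_of_ne hw₀'1 (by rintro rfl; omega)
          -- key computation, valid for any interval [a,b] with ranks (ρ x, ρ y)
          have key : ∀ a b : P, a < b → ρ a = ρ x → ρ b = ρ y →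
              (Lf ρ a b j).card * (Lf ρ x' w₀' (ρ x' + 1)).card
                = (Lf ρ x' y' (ρ x' + 1)).card * (Lf ρ z₀' y' j).card := by
            intro a b hab hra hrb
            have h1 : ∑ z ∈ Lf ρ a b (ρ a + 1), (Lf ρ z b j).card
                = (Lf ρ a b (ρ a + 1)).card * (Lf ρ z₀' y' j).card := by
              rw [Finset.sum_congr rfl (fun z hz => ?_), Finset.sum_const, smul_eq_mul]
              obtain ⟨haz, hzb, hrz⟩ := mem_Lf.mp hz
              have hzb' : z ≤ b := hzb
              exact ih z b z₀' y' hzb hz₀'le (by omega) (by omega) j (by omega)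
                (by omega) (by omega)
            have h2 : ∑ w ∈ Lf ρ a b j, (Lf ρ a w (ρ a + 1)).card
                = (Lf ρ a b j).card * (Lf ρ x' w₀' (ρ x' + 1)).card := by
              rw [Finset.sum_congr rfl (fun w hw => ?_), Finset.sum_const, smul_eq_mul]
              obtain ⟨haw, hwb, hrw⟩ := mem_Lf.mp hw
              have hawlt : a < w := lt_of_le_of_ne haw (by rintro rfl; omega)
              have h := wd1 a w x' w₀' hawlt hx'w₀' (by omega) (by omega) (by omega)
              rw [h]
            have h3 : (Lf ρ a b (ρ a + 1)).card = (Lf ρ x' y' (ρ x' + 1)).card :=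
              wd1 a b x' y' hab hxlty' (by omega) (by omega) (by omega)
            rw [← h2, ← dc ρ a b j, h1, h3]
          have hB : 0 < (Lf ρ x' w₀' (ρ x' + 1)).card := Lf_cover_card_pos hcov hx'w₀'
          have k1 := key x y hxlty rfl rfl
          have k2 := key x' y' hxlty' hrx.symm hry.symm
          exact Nat.eq_of_mul_eq_mul_right hB (k1.trans k2.symm)
    refine ⟨fun i j k =>
      if h : ∃ p : P × P, p.1 ≤ p.2 ∧ ρ p.1 = i ∧ ρ p.2 = k then
        (Lf ρ h.choose.1 h.choose.2 j).card else 0, ?_⟩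
    intro x y hxy j hj1 hj2
    have hex : ∃ p : P × P, p.1 ≤ p.2 ∧ ρ p.1 = ρ x ∧ ρ p.2 = ρ y := ⟨(x, y), hxy, rfl, rfl⟩
    beta_reduce
    rw [dif_pos hex, card_Lf_eq]
    exact wd (j - ρ x) x y hex.choose.1 hex.choose.2 hxy hex.choose_spec.1
      hex.choose_spec.2.1.symm hex.choose_spec.2.2.symm j hj1 hj2 le_rfl
  · rintro ⟨N, hN⟩
    classical
    refine ⟨fun i k => ∏ t ∈ Finset.range (k - i - 1), N (i + t) (i + t + 1) k, ?_⟩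
    have hM1 : ∀ i k : ℕ, k = i + 1 →
        (∏ t ∈ Finset.range (k - i - 1), N (i + t) (i + t + 1) k) = 1 := by
      intro i k h
      subst h
      simp
    have hMrec : ∀ i k : ℕ, i + 1 < k →
        (∏ t ∈ Finset.range (k - i - 1), N (i + t) (i + t + 1) k)
          = N i (i + 1) k * ∏ t ∈ Finset.range (k - (i + 1) - 1), N (i + 1 + t) (i + 1 + t + 1) k := by
      intro i k h
      have he : k - i - 1 = (k - i - 2) + 1 := by omega
      rw [he, Finset.prod_range_succ']
      simp only [Nat.add_zero]
      rw [mul_comm]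
      congr 1
      have he2 : k - (i + 1) - 1 = k - i - 2 := by omega
      rw [he2]
      refine Finset.prod_congr rfl fun t _ => ?_
      have : i + (t + 1) = i + 1 + t := by omega
      rw [this]
    have main : ∀ n : ℕ, ∀ x y : P, x < y → ρ y - ρ x ≤ n →
        Nat.card (maxChains x y)
          = ∏ t ∈ Finset.range (ρ y - ρ x - 1), N (ρ x + t) (ρ x + t + 1) (ρ y) := by
      intro n
      induction n with
      | zero =>
        intro x y hxy hb
        have := rk_lt_of_lt' hcov hxy
        omega
      | succ n ih =>
        intro x y hxy hb
        have hik := rk_lt_of_lt' hcov hxy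
        rcases eq_or_lt_of_le (show ρ x + 1 ≤ ρ y by omega) with heq | hgt
        · have hc : x ⋖ y := covBy_of_rank hcov hxy heq.symm
          rw [maxChains_covBy hc, hM1 _ _ heq.symm]
          simp [Nat.card_coe_set_eq, Set.ncard_singleton]
        · rw [maxChains_split x y hxy (Lf ρ x y (ρ x + 1)) (mem_Lf_cover hcov)]
          have hterm : ∀ z ∈ Lf ρ x y (ρ x + 1), Nat.card (maxChains z y)
              = ∏ t ∈ Finset.range (ρ y - (ρ x + 1) - 1),
                  N (ρ x + 1 + t) (ρ x + 1 + t + 1) (ρ y) := by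
            intro z hz
            obtain ⟨hxz, hzy, hrz⟩ := mem_Lf.mp hz
            have hzylt : z < y := lt_of_le_of_ne hzy (by rintro rfl; omega)
            have h := ih z y hzylt (by omega)
            rw [h, hrz]
          rw [Finset.sum_congr rfl hterm, Finset.sum_const, smul_eq_mul]
          have hcard : (Lf ρ x y (ρ x + 1)).card = N (ρ x) (ρ x + 1) (ρ y) := by
            rw [← card_Lf_eq]
            exact hN x y hxy.le (ρ x + 1) (by omega) hgt
          rw [hcard, hMrec (ρ x) (ρ y) hgt]
    intro x y hxy
    exact main (ρ y - ρ x) x y hxy le_rfl
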